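/- arXiv:1305.1775 — 2 statements merged into one kernel-verified Lean document; each statement's English description precedes it below -/
import Mathlib

section
/- Let a₁ : V₁ × V₁ → ℂ and a₂ : V₂ × V₂ → ℂ be continuous elliptic sesquilinear forms with associated operators A₁, A₂. If Φ ∈ L(H₁,H₂) satisfies Φ(V₁) ⊆ V₂, Φ*(V₂) ⊆ V₁, and a₂(Φu, v) = a₁(u, Φ*v) for all u ∈ V₁, v ∈ V₂, then Φ(D(A₁)) ⊆ D(A₂) and A₂Φu = ΦA₁u for all u ∈ D(A₁). -/
open ContinuousLinearMap

/-- Let `a₁`, `a₂` be continuous elliptic sesquilinear forms on `V₁ ⊆ H₁`, `V₂ ⊆ H₂`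
(the dense embeddings being `J₁`, `J₂`), with associated operators `A₁` (domain `D₁`) and
`A₂` (domain `D₂`).  If `Φ(V₁) ⊆ V₂`, `Φ*(V₂) ⊆ V₁` and `a₂(Φu, v) = a₁(u, Φ*v)` for all
`u ∈ V₁`, `v ∈ V₂`, then `Φ(D(A₁)) ⊆ D(A₂)` and `A₂ Φ u = Φ A₁ u` on `D(A₁)`. -/
theorem stmt2 {H₁ H₂ V₁ V₂ : Type*}
    [NormedAddCommGroup H₁] [InnerProductSpace ℂ H₁] [CompleteSpace H₁]
    [NormedAddCommGroup H₂] [InnerProductSpace ℂ H₂] [CompleteSpace H₂]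
    [NormedAddCommGroup V₁] [InnerProductSpace ℂ V₁] [CompleteSpace V₁]
    [NormedAddCommGroup V₂] [InnerProductSpace ℂ V₂] [CompleteSpace V₂]
    (J₁ : V₁ →L[ℂ] H₁) (J₂ : V₂ →L[ℂ] H₂)
    (hJ₁ : Function.Injective J₁) (hJ₂ : Function.Injective J₂)
    (hdense₁ : DenseRange J₁) (hdense₂ : DenseRange J₂)
    (a₁ : V₁ → V₁ → ℂ) (a₂ : V₂ → V₂ → ℂ)
    -- sesquilinearity (linear in the first, conjugate-linear in the second argument)
    (hlin₁ : ∀ (c : ℂ) u u' v, a₁ (c • u + u') v = c * a₁ u v + a₁ u' v)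
    (hconj₁ : ∀ (c : ℂ) u v v', a₁ u (c • v + v') = starRingEnd ℂ c * a₁ u v + a₁ u v')
    (hlin₂ : ∀ (c : ℂ) u u' v, a₂ (c • u + u') v = c * a₂ u v + a₂ u' v)
    (hconj₂ : ∀ (c : ℂ) u v v', a₂ u (c • v + v') = starRingEnd ℂ c * a₂ u v + a₂ u v')
    -- continuity
    (hcont₁ : ∃ M : ℝ, ∀ u v, ‖a₁ u v‖ ≤ M * ‖u‖ * ‖v‖)
    (hcont₂ : ∃ M : ℝ, ∀ u v, ‖a₂ u v‖ ≤ M * ‖u‖ * ‖v‖)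
    -- ellipticity : Re a(u,u) + ω ‖u‖²_H ≥ μ ‖u‖²_V
    (hell₁ : ∃ (ω μ : ℝ), 0 < μ ∧ ∀ u, μ * ‖u‖ ^ 2 ≤ (a₁ u u).re + ω * ‖J₁ u‖ ^ 2)
    (hell₂ : ∃ (ω μ : ℝ), 0 < μ ∧ ∀ u, μ * ‖u‖ ^ 2 ≤ (a₂ u u).re + ω * ‖J₂ u‖ ^ 2)
    -- the associated operators: D(A) = {u ∈ V : ∃ f ∈ H, a(u,v) = (f,v)_H ∀ v ∈ V}, A u = f
    (D₁ : Set H₁) (A₁ : H₁ → H₁) (D₂ : Set H₂) (A₂ : H₂ → H₂)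
    (hD₁ : ∀ f : H₁, f ∈ D₁ ↔
      ∃ u : V₁, J₁ u = f ∧ ∃ g : H₁, ∀ v : V₁, a₁ u v = inner ℂ (J₁ v) g)
    (hA₁ : ∀ f ∈ D₁, ∀ u : V₁, J₁ u = f → ∀ v : V₁, a₁ u v = inner ℂ (J₁ v) (A₁ f))
    (hD₂ : ∀ f : H₂, f ∈ D₂ ↔
      ∃ u : V₂, J₂ u = f ∧ ∃ g : H₂, ∀ v : V₂, a₂ u v = inner ℂ (J₂ v) g)
    (hA₂ : ∀ f ∈ D₂, ∀ u : V₂, J₂ u = f → ∀ v : V₂, a₂ u v = inner ℂ (J₂ v) (A₂ f))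
    (Φ : H₁ →L[ℂ] H₂)
    -- Φ(V₁) ⊆ V₂ and Φ*(V₂) ⊆ V₁
    (hΦV : ∀ u : V₁, Φ (J₁ u) ∈ Set.range J₂)
    (hΦsV : ∀ v : V₂, adjoint Φ (J₂ v) ∈ Set.range J₁)
    -- a₂(Φ u, v) = a₁(u, Φ* v) for all u ∈ V₁, v ∈ V₂
    (hform : ∀ (u : V₁) (v : V₂) (u' : V₂) (v' : V₁),
      J₂ u' = Φ (J₁ u) → J₁ v' = adjoint Φ (J₂ v) → a₂ u' v = a₁ u v') :
    ∀ f ∈ D₁, Φ f ∈ D₂ ∧ A₂ (Φ f) = Φ (A₁ f) := by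
  intro f hf
  -- unpack f ∈ D₁
  obtain ⟨u, hu, g, hg⟩ := (hD₁ f).mp hf
  have hA₁u : ∀ v : V₁, a₁ u v = inner ℂ (J₁ v) (A₁ f) := hA₁ f hf u hu
  -- Φ u lands in V₂
  obtain ⟨u', hu'⟩ := hΦV u
  have hu'f : J₂ u' = Φ f := by rw [hu', hu]
  -- key identity : a₂(u', v) = ⟪J₂ v, Φ (A₁ f)⟫ for all v
  have key : ∀ v : V₂, a₂ u' v = inner ℂ (J₂ v) (Φ (A₁ f)) := by
    intro v
    obtain ⟨v', hv'⟩ := hΦsV v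
    have h1 : a₂ u' v = a₁ u v' := hform u v u' v' hu' hv'
    rw [h1, hA₁u v', hv', ContinuousLinearMap.adjoint_inner_left]
  refine ⟨(hD₂ (Φ f)).mpr ⟨u', hu'f, Φ (A₁ f), key⟩, ?_⟩
  have hmem : Φ f ∈ D₂ := (hD₂ (Φ f)).mpr ⟨u', hu'f, Φ (A₁ f), key⟩
  have hA₂u : ∀ v : V₂, a₂ u' v = inner ℂ (J₂ v) (A₂ (Φ f)) := hA₂ (Φ f) hmem u' hu'f
  -- uniqueness via density
  have hzero : ∀ v : V₂, (inner ℂ (J₂ v) (A₂ (Φ f) - Φ (A₁ f)) : ℂ) = 0 := by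
    intro v
    rw [inner_sub_right, ← hA₂u v, ← key v, sub_self]
  have hall : ∀ y : H₂, (inner ℂ y (A₂ (Φ f) - Φ (A₁ f)) : ℂ) = 0 := by
    have hc : Continuous fun y : H₂ => (inner ℂ y (A₂ (Φ f) - Φ (A₁ f)) : ℂ) :=
      continuous_id.inner continuous_const
    have heq : (fun y : H₂ => (inner ℂ y (A₂ (Φ f) - Φ (A₁ f)) : ℂ)) = fun _ => 0 := by
      refine Continuous.ext_on hdense₂ hc continuous_const ?_
      rintro y ⟨v, rfl⟩
      exact hzero v
    intro y
    exact congrFun heq y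
  have : A₂ (Φ f) - Φ (A₁ f) = 0 := by
    have := hall (A₂ (Φ f) - Φ (A₁ f))
    rwa [inner_self_eq_zero] at this
  exact sub_eq_zero.mp this
end

section
/- Let A₁ and A₂ be self-adjoint operators on Hilbert spaces H₁ and H₂, bounded below, whose negatives generate semigroups S¹ and S². If there exists an invertible Φ ∈ L(H₁,H₂) with S²_t Φ = Φ S¹_t for all t > 0, then there exists a unitary U ∈ L(H₁,H₂) with U S¹_t = S²_t U for all t > 0. -/
open Filter Set

section AuxCommuteCfc
open ContinuousLinearMap Polynomial

lemma commute_cfc_aux {A : Type*} [CStarAlgebra A] {a b : A} (ha : IsSelfAdjoint a)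
    (hab : Commute b a) (f : ℝ → ℝ) : Commute b (cfc f a) := by
  by_cases hf : ContinuousOn f (spectrum ℝ a)
  · rw [cfc_apply f a ha hf]
    set ψ := cfcHom ha (R := ℝ)
    suffices h : ∀ g : C(spectrum ℝ a, ℝ), Commute b (ψ g) from h _
    intro g
    have hclosed : IsClosed {g : C(spectrum ℝ a, ℝ) | Commute b (ψ g)} := by
      have h1 : IsClosed {y : A | b * y = y * b} :=
        isClosed_eq (by fun_prop) (by fun_prop)
      exact h1.preimage (cfcHom_isClosedEmbedding ha).continuous
    have hpoly : ∀ q ∈ polynomialFunctions (spectrum ℝ a), Commute b (ψ q) := by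
      rintro q hq
      obtain ⟨p, -, rfl⟩ := hq
      show Commute b (ψ (p.toContinuousMapOn (spectrum ℝ a)))
      have key : ψ (p.toContinuousMapOn (spectrum ℝ a)) = Polynomial.aeval a p := by
        have h2 : ψ ((toContinuousMapOnAlgHom (spectrum ℝ a)) (Polynomial.X : ℝ[X])) = a := by
          have h0 := cfcHom_id (R := ℝ) ha
          have hX : (toContinuousMapOnAlgHom (spectrum ℝ a)) (Polynomial.X : ℝ[X])
              = ContinuousMap.restrict (spectrum ℝ a) (ContinuousMap.id ℝ) := by
            ext x; simp
          rw [hX]; exact h0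
        have h3 : p.toContinuousMapOn (spectrum ℝ a)
            = Polynomial.aeval ((toContinuousMapOnAlgHom (spectrum ℝ a)) (Polynomial.X : ℝ[X])) p := by
          rw [Polynomial.aeval_algHom_apply, Polynomial.aeval_X_left_apply]; rfl
        rw [h3, ← Polynomial.aeval_algHom_apply, h2]
      rw [key]
      exact Algebra.commute_of_mem_adjoin_singleton_of_commute
        (Polynomial.aeval_mem_adjoin_singleton ℝ a) hab
    have htop := polynomialFunctions.topologicalClosure (spectrum ℝ a)
    have hg : g ∈ (polynomialFunctions (spectrum ℝ a)).topologicalClosure := by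
      rw [htop]; trivial
    exact closure_minimal hpoly hclosed hg
  · simp [cfc_apply_of_not_continuousOn a hf]

end AuxCommuteCfc

/-- `-A` (with domain `D`) is the generator of the C₀-semigroup `S`. -/
structure IsNegGeneratorOf {H : Type*} [NormedAddCommGroup H] [InnerProductSpace ℂ H]
    (S : ℝ → H →L[ℂ] H) (D : Set H) (A : H → H) : Prop where
  map_zero : S 0 = 1
  map_add : ∀ s t : ℝ, 0 ≤ s → 0 ≤ t → S (s + t) = (S s).comp (S t)
  cont : ∀ u : H, Continuous fun t : ℝ => S t u
  mem_iff : ∀ u : H, u ∈ D ↔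
    ∃ v : H, Tendsto (fun t : ℝ => t⁻¹ • (u - S t u)) (nhdsWithin 0 (Ioi 0)) (nhds v)
  tendsto : ∀ u ∈ D, Tendsto (fun t : ℝ => t⁻¹ • (u - S t u)) (nhdsWithin 0 (Ioi 0)) (nhds (A u))

/-- Let `A₁`, `A₂` be self-adjoint operators, bounded below (so that each `S¹ₜ`, `S²ₜ` is
self-adjoint).  If some invertible `Φ` satisfies `S²ₜ Φ = Φ S¹ₜ` for all `t > 0`, then there
is a unitary `U` with `U S¹ₜ = S²ₜ U` for all `t > 0`. -/
theorem stmt5 {H₁ H₂ : Type*}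
    [NormedAddCommGroup H₁] [InnerProductSpace ℂ H₁] [CompleteSpace H₁]
    [NormedAddCommGroup H₂] [InnerProductSpace ℂ H₂] [CompleteSpace H₂]
    (S₁ : ℝ → H₁ →L[ℂ] H₁) (S₂ : ℝ → H₂ →L[ℂ] H₂)
    (D₁ : Set H₁) (A₁ : H₁ → H₁) (D₂ : Set H₂) (A₂ : H₂ → H₂)
    (hgen₁ : IsNegGeneratorOf S₁ D₁ A₁) (hgen₂ : IsNegGeneratorOf S₂ D₂ A₂)
    (hsa₁ : ∀ t : ℝ, 0 ≤ t → IsSelfAdjoint (S₁ t))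
    (hsa₂ : ∀ t : ℝ, 0 ≤ t → IsSelfAdjoint (S₂ t))
    (hbb₁ : ∃ c : ℝ, ∀ u ∈ D₁, c * ‖u‖ ^ 2 ≤ (inner ℂ (A₁ u) u : ℂ).re)
    (hbb₂ : ∃ c : ℝ, ∀ u ∈ D₂, c * ‖u‖ ^ 2 ≤ (inner ℂ (A₂ u) u : ℂ).re)
    (hΦ : ∃ Φ : H₁ ≃L[ℂ] H₂, ∀ t : ℝ, 0 < t → ∀ x : H₁, S₂ t (Φ x) = Φ (S₁ t x)) :
    ∃ U : H₁ ≃ₗᵢ[ℂ] H₂, ∀ t : ℝ, 0 < t → ∀ x : H₁, U (S₁ t x) = S₂ t (U x) := by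
  open ContinuousLinearMap in
  obtain ⟨Φ, hΦc⟩ := hΦ
  set P : H₁ →L[ℂ] H₂ := (Φ : H₁ →L[ℂ] H₂) with hPdef
  set Q : H₂ →L[ℂ] H₁ := (Φ.symm : H₂ →L[ℂ] H₁) with hQdef
  have hPQ : P ∘L Q = 1 := by ext x; simp [hPdef, hQdef, ContinuousLinearMap.one_def]
  have hQP : Q ∘L P = 1 := by ext x; simp [hPdef, hQdef, ContinuousLinearMap.one_def]
  have hP : ∀ t, 0 < t → P ∘L S₁ t = S₂ t ∘L P := by
    intro t ht; ext x; simpa [hPdef] using (hΦc t ht x).symm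
  have hPa : ∀ t, 0 < t → S₁ t ∘L adjoint P = adjoint P ∘L S₂ t := by
    intro t ht
    have h := congrArg ContinuousLinearMap.adjoint (hP t ht)
    rw [adjoint_comp, adjoint_comp] at h
    rwa [ContinuousLinearMap.isSelfAdjoint_iff'.mp (hsa₁ t ht.le),
      ContinuousLinearMap.isSelfAdjoint_iff'.mp (hsa₂ t ht.le)] at h
  set T : H₁ →L[ℂ] H₁ := adjoint P ∘L P with hTdef
  have hT0 : (0 : H₁ →L[ℂ] H₁) ≤ T := by
    rw [nonneg_iff_isPositive]
    have h := (isPositive_one (E := H₂)).adjoint_conj P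
    rw [ContinuousLinearMap.one_def, ContinuousLinearMap.id_comp] at h
    exact h
  have hTsa : IsSelfAdjoint T := hT0.isSelfAdjoint
  have hTS : ∀ t, 0 < t → Commute (S₁ t) T := by
    intro t ht
    show S₁ t * T = T * S₁ t
    calc S₁ t * T = (S₁ t ∘L adjoint P) ∘L P := by
          rw [hTdef]; rfl
      _ = (adjoint P ∘L S₂ t) ∘L P := by rw [hPa t ht]
      _ = adjoint P ∘L (S₂ t ∘L P) := by rw [ContinuousLinearMap.comp_assoc]
      _ = adjoint P ∘L (P ∘L S₁ t) := by rw [← hP t ht]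
      _ = T * S₁ t := by rw [hTdef]; show _ = (adjoint P ∘L P) ∘L S₁ t; rw [ContinuousLinearMap.comp_assoc]
  -- square root
  set R : H₁ →L[ℂ] H₁ := cfc Real.sqrt T with hRdef
  have hspec : ∀ x ∈ spectrum ℝ T, 0 ≤ x := fun x hx =>
    spectrum_nonneg_of_nonneg hT0 hx
  have hR0 : (0 : H₁ →L[ℂ] H₁) ≤ R := cfc_nonneg (fun x _ => Real.sqrt_nonneg x)
  have hRsa : IsSelfAdjoint R := hR0.isSelfAdjoint
  have hRR : R * R = T := by
    rw [hRdef, ← cfc_mul Real.sqrt Real.sqrt T]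
    calc cfc (fun x => Real.sqrt x * Real.sqrt x) T
        = cfc (fun x : ℝ => x) T :=
          cfc_congr fun x hx => Real.mul_self_sqrt (hspec x hx)
      _ = T := cfc_id ℝ T
  have hRS : ∀ t, 0 < t → Commute (S₁ t) R :=
    fun t ht => commute_cfc_aux hT0.isSelfAdjoint (hTS t ht) Real.sqrt
  -- inverse of T
  set Tinv : H₁ →L[ℂ] H₁ := Q ∘L adjoint Q with hTinvdef
  have hQQ : adjoint P ∘L adjoint Q = 1 := by
    rw [← adjoint_comp, hQP]
    simp [ContinuousLinearMap.one_def, ContinuousLinearMap.adjoint_id]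
  have hQQ' : adjoint Q ∘L adjoint P = 1 := by
    rw [← adjoint_comp, hPQ]
    simp [ContinuousLinearMap.one_def, ContinuousLinearMap.adjoint_id]
  have hTT1 : T * Tinv = 1 := by
    show (adjoint P ∘L P) ∘L (Q ∘L adjoint Q) = 1
    rw [ContinuousLinearMap.comp_assoc, ← ContinuousLinearMap.comp_assoc P Q,
      hPQ, ContinuousLinearMap.one_def, ContinuousLinearMap.id_comp, hQQ]
  have hT1T : Tinv * T = 1 := by
    show (Q ∘L adjoint Q) ∘L (adjoint P ∘L P) = 1
    rw [ContinuousLinearMap.comp_assoc, ← ContinuousLinearMap.comp_assoc (adjoint Q) (adjoint P),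
      hQQ', ContinuousLinearMap.one_def, ContinuousLinearMap.id_comp, hQP]
  set Rinv : H₁ →L[ℂ] H₁ := R * Tinv with hRinvdef
  have hRRinv : R * Rinv = 1 := by
    rw [hRinvdef, ← mul_assoc, hRR, hTT1]
  have hEq : Tinv * R = R * Tinv :=
    left_inv_eq_right_inv (by rw [mul_assoc, hRR, hT1T]) hRRinv
  have hRinvR : Rinv * R = 1 := by
    rw [hRinvdef, ← hEq, mul_assoc, hRR, hT1T]
  have hcRinv : ∀ t, 0 < t → Commute (S₁ t) Rinv := by
    intro t ht
    have := (hRS t ht).units_inv_right (u := ⟨R, Rinv, hRRinv, hRinvR⟩)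
    exact this
  -- the unitary
  set U₀ : H₁ →L[ℂ] H₂ := P ∘L Rinv with hU₀def
  set V : H₂ →L[ℂ] H₁ := R ∘L Q with hVdef
  have hUV : U₀ ∘L V = 1 := by
    rw [hU₀def, hVdef, ContinuousLinearMap.comp_assoc, ← ContinuousLinearMap.comp_assoc Rinv R Q]
    rw [show Rinv ∘L R = 1 from hRinvR, ContinuousLinearMap.one_def,
      ContinuousLinearMap.id_comp, hPQ]
  have hVU : V ∘L U₀ = 1 := by
    rw [hVdef, hU₀def, ContinuousLinearMap.comp_assoc, ← ContinuousLinearMap.comp_assoc Q P Rinv]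
    rw [hQP, ContinuousLinearMap.one_def, ContinuousLinearMap.id_comp]
    exact hRRinv
  set E : H₁ ≃L[ℂ] H₂ := ContinuousLinearEquiv.equivOfInverse U₀ V
    (fun x => by simpa using DFunLike.congr_fun hVU x)
    (fun x => by simpa using DFunLike.congr_fun hUV x) with hEdef
  have hnorm : ∀ x : H₁, ‖U₀ x‖ = ‖x‖ := by
    intro x
    have hRRx : R (Rinv x) = x := by
      simpa [ContinuousLinearMap.mul_apply] using DFunLike.congr_fun hRRinv x
    have key : (inner ℂ (U₀ x) (U₀ x) : ℂ) = inner ℂ x x := by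
      calc (inner ℂ (U₀ x) (U₀ x) : ℂ) = inner ℂ (P (Rinv x)) (P (Rinv x)) := rfl
        _ = inner ℂ (Rinv x) (adjoint P (P (Rinv x))) := (adjoint_inner_right P _ _).symm
        _ = inner ℂ (Rinv x) (R (R (Rinv x))) := by
            rw [show adjoint P (P (Rinv x)) = T (Rinv x) from rfl, ← hRR]
            rfl
        _ = inner ℂ (adjoint R (Rinv x)) (R (Rinv x)) := (adjoint_inner_left R _ _).symm
        _ = inner ℂ x x := by
            rw [ContinuousLinearMap.isSelfAdjoint_iff'.mp hRsa, hRRx]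
    rw [norm_eq_sqrt_re_inner (𝕜 := ℂ) (U₀ x), norm_eq_sqrt_re_inner (𝕜 := ℂ) x, key]
  refine ⟨⟨E.toLinearEquiv, fun x => hnorm x⟩, ?_⟩
  intro t ht x
  show U₀ (S₁ t x) = S₂ t (U₀ x)
  have h1 : Rinv (S₁ t x) = S₁ t (Rinv x) := by
    simpa [ContinuousLinearMap.mul_apply] using (DFunLike.congr_fun (hcRinv t ht).eq x).symm
  calc U₀ (S₁ t x) = P (Rinv (S₁ t x)) := rfl
    _ = P (S₁ t (Rinv x)) := by rw [h1]
    _ = S₂ t (P (Rinv x)) := DFunLike.congr_fun (hP t ht) (Rinv x)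
    _ = S₂ t (U₀ x) := rfl
end
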